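/- Let u : ℝ → ℝ be continuous on [0,π] with u(0) = u(π) = 0, continuously differentiable on (0,π), with ∫_0^π u'(θ)² dθ < ∞, and not identically zero on (0,π). Then ∫_0^π u'(θ)² dθ > (1/4) ∫_0^π u(θ)²/sin²θ dθ; in particular the infimum 1/4 of the quotient (∫_0^π u'(θ)² dθ)/(∫_0^π u(θ)²/sin²θ dθ) is not attained. -/

import Mathlib

open MeasureTheory Real intervalIntegral Set Filter Topology

lemma hardy_key (u : ℝ → ℝ)
    (hd : ∀ x ∈ Set.Ioo 0 Real.pi, HasDerivAt u (deriv u x) x)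
    (hc : ContinuousOn u (Set.Ioo 0 Real.pi))
    (hc' : ContinuousOn (deriv u) (Set.Ioo 0 Real.pi))
    {a b : ℝ} (ha : 0 < a) (hab : a ≤ b) (hb : b < Real.pi) :
    (1/4) * (∫ θ in a..b, u θ^2 / Real.sin θ^2) + (1/4) * (∫ θ in a..b, u θ^2)
      + (u b^2 * (Real.cos b / (2 * Real.sin b)) - u a^2 * (Real.cos a / (2 * Real.sin a)))
      ≤ ∫ θ in a..b, (deriv u θ)^2 := by
  set w : ℝ → ℝ := fun θ => Real.cos θ / (2 * Real.sin θ) with hw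
  set F : ℝ → ℝ := fun θ => u θ^2 * w θ with hF
  set φ : ℝ → ℝ := fun θ =>
    (deriv u θ)^2 - (deriv u θ - w θ * u θ)^2 - u θ^2/(4 * Real.sin θ^2) - u θ^2/4 with hφ
  have hsub : Set.Icc a b ⊆ Set.Ioo 0 Real.pi := fun x hx => ⟨lt_of_lt_of_le ha hx.1, lt_of_le_of_lt hx.2 hb⟩
  have hsin : ∀ x ∈ Set.Icc a b, Real.sin x ≠ 0 := fun x hx =>
    ne_of_gt (Real.sin_pos_of_pos_of_lt_pi (hsub hx).1 (hsub hx).2)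
  -- continuity facts on Icc a b
  have hcw : ContinuousOn w (Set.Icc a b) :=
    (Real.continuous_cos.continuousOn).div
      (continuous_const.mul Real.continuous_sin).continuousOn
      (fun x hx => by simpa using hsin x hx)
  have hcu : ContinuousOn u (Set.Icc a b) := hc.mono hsub
  have hcu' : ContinuousOn (deriv u) (Set.Icc a b) := hc'.mono hsub
  have huIcc : Set.uIcc a b = Set.Icc a b := Set.uIcc_of_le hab
  have hI1 : IntervalIntegrable (fun θ => u θ^2 / Real.sin θ^2) volume a b := by
    apply ContinuousOn.intervalIntegrable
    rw [huIcc]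
    exact ((hcu.pow 2).div ((Real.continuous_sin.continuousOn).pow 2)
      (fun x hx => pow_ne_zero 2 (hsin x hx)))
  have hI2 : IntervalIntegrable (fun θ => u θ^2) volume a b := by
    apply ContinuousOn.intervalIntegrable; rw [huIcc]; exact hcu.pow 2
  have hI3 : IntervalIntegrable (fun θ => (deriv u θ - w θ * u θ)^2) volume a b := by
    apply ContinuousOn.intervalIntegrable; rw [huIcc]
    exact (hcu'.sub (hcw.mul hcu)).pow 2
  have hI4 : IntervalIntegrable (fun θ => (deriv u θ)^2) volume a b := by
    apply ContinuousOn.intervalIntegrable; rw [huIcc]; exact hcu'.pow 2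
  have hI5 : IntervalIntegrable (fun θ => u θ^2/(4 * Real.sin θ^2)) volume a b := by
    apply ContinuousOn.intervalIntegrable; rw [huIcc]
    exact (hcu.pow 2).div (continuous_const.continuousOn.mul
      ((Real.continuous_sin.continuousOn).pow 2))
      (fun x hx => by
        have := hsin x hx
        positivity)
  have hI6 : IntervalIntegrable (fun θ => u θ^2/4) volume a b := hI2.div_const 4
  have hIφ : IntervalIntegrable φ volume a b := ((hI4.sub hI3).sub hI5).sub hI6
  -- FTC for F
  have hFderiv : ∀ x ∈ Set.uIcc a b, HasDerivAt F (φ x) x := by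
    intro x hx
    rw [huIcc] at hx
    have hx' := hsub hx
    have hs : Real.sin x ≠ 0 := hsin x hx
    have hdu : HasDerivAt u (deriv u x) x := hd x hx'
    have hdw : HasDerivAt w ((-Real.sin x * (2 * Real.sin x) - Real.cos x * (2 * Real.cos x))
        / (2 * Real.sin x)^2) x := by
      exact (Real.hasDerivAt_cos x).div ((Real.hasDerivAt_sin x).const_mul 2)
        (by simpa using hs)
    have hdu2 : HasDerivAt (fun θ => u θ ^ 2) (2 * u x ^ 1 * deriv u x) x := by
      simpa using hdu.fun_pow 2
    have : HasDerivAt F _ x := hdu2.mul hdw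
    convert this using 1
    have hpyth := Real.sin_sq_add_cos_sq x
    simp only [φ, w]
    field_simp
    linear_combination (4 * u x ^ 2) * hpyth
  have hFTC : ∫ θ in a..b, φ θ = F b - F a :=
    intervalIntegral.integral_eq_sub_of_hasDerivAt hFderiv hIφ
  -- expand ∫ φ
  have hsplit : ∫ θ in a..b, φ θ = (∫ θ in a..b, (deriv u θ)^2)
      - (∫ θ in a..b, (deriv u θ - w θ * u θ)^2)
      - (∫ θ in a..b, u θ^2/(4 * Real.sin θ^2)) - (∫ θ in a..b, u θ^2/4) := by
    rw [hφ]
    rw [intervalIntegral.integral_sub ((hI4.sub hI3).sub hI5) hI6,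
        intervalIntegral.integral_sub (hI4.sub hI3) hI5,
        intervalIntegral.integral_sub hI4 hI3]
  have h5 : (∫ θ in a..b, u θ^2/(4 * Real.sin θ^2)) = (1/4) * ∫ θ in a..b, u θ^2 / Real.sin θ^2 := by
    rw [← intervalIntegral.integral_const_mul]
    apply intervalIntegral.integral_congr
    intro x hx
    ring
  have h6 : (∫ θ in a..b, u θ^2/4) = (1/4) * ∫ θ in a..b, u θ^2 := by
    rw [← intervalIntegral.integral_const_mul]
    apply intervalIntegral.integral_congr
    intro x hx
    ring
  have hG : 0 ≤ ∫ θ in a..b, (deriv u θ - w θ * u θ)^2 :=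
    intervalIntegral.integral_nonneg hab (fun x _ => sq_nonneg _)
  have hFb : F b = u b^2 * (Real.cos b / (2 * Real.sin b)) := rfl
  have hFa : F a = u a^2 * (Real.cos a / (2 * Real.sin a)) := rfl
  rw [h5, h6] at hsplit
  rw [hFTC] at hsplit
  rw [hFb, hFa] at hsplit
  linarith

lemma hardy_endpoint (f : ℝ → ℝ) {s t : ℝ} (hst : s < t)
    (hcont : ContinuousOn f (Set.Icc s t))
    (hd : ∀ x ∈ Set.Ioo s t, HasDerivAt f (deriv f x) x)
    (hint : IntervalIntegrable (fun x => (deriv f x)^2) volume s t) :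
    (f t - f s)^2 ≤ (t - s) * ((∫ x in s..t, (deriv f x)^2) + (t - s)^2) := by
  set D := ∫ x in s..t, (deriv f x)^2 with hDdef
  have hD0 : 0 ≤ D := intervalIntegral.integral_nonneg hst.le (fun x _ => sq_nonneg _)
  set a := t - s with hadef
  have ha : 0 < a := sub_pos.mpr hst
  have hm : AEStronglyMeasurable (deriv f) (volume.restrict (Set.uIoc s t)) :=
    (measurable_deriv f).aestronglyMeasurable
  have hgint : IntervalIntegrable (deriv f) volume s t := by
    apply IntervalIntegrable.mono_fun' (g := fun x => (1 + (deriv f x)^2)/2)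
      ((intervalIntegrable_const.add hint).div_const 2) hm
    filter_upwards with x
    simp only [Real.norm_eq_abs]
    nlinarith [sq_nonneg (|deriv f x| - 1), sq_abs (deriv f x)]
  have hFTC : ∫ x in s..t, deriv f x = f t - f s :=
    intervalIntegral.integral_eq_sub_of_hasDeriv_right_of_le hst.le hcont
      (fun x hx => (hd x hx).hasDerivWithinAt) hgint
  set ε := Real.sqrt ((D + a^2)/a) with hεdef
  have hεsq : ε^2 = (D + a^2)/a := Real.sq_sqrt (by positivity)
  have hε : 0 < ε := Real.sqrt_pos.mpr (by positivity)
  have h3 : ε^2 * a = D + a^2 := by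
    rw [hεsq]; field_simp
  have habs : |f t - f s| ≤ ∫ x in s..t, |deriv f x| := by
    rw [← hFTC]; exact intervalIntegral.abs_integral_le_integral_abs hst.le
  have hmono : (∫ x in s..t, |deriv f x|) ≤ ∫ x in s..t, (ε/2 + (deriv f x)^2/(2*ε)) := by
    apply intervalIntegral.integral_mono_on hst.le hgint.abs
      (intervalIntegrable_const.add (hint.div_const _))
    intro x _
    have h := sq_nonneg (ε - |deriv f x|)
    rw [div_add_div _ _ (two_ne_zero) (by positivity), le_div_iff₀ (by positivity)]
    nlinarith [sq_abs (deriv f x)]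
  have hval : (∫ x in s..t, (ε/2 + (deriv f x)^2/(2*ε))) = ε/2 * a + D/(2*ε) := by
    rw [intervalIntegral.integral_add intervalIntegrable_const (hint.div_const _),
      intervalIntegral.integral_const, intervalIntegral.integral_div]
    rw [smul_eq_mul]
    ring
  have hkey : |f t - f s| ≤ Real.sqrt (a * (D + a^2)) := by
    have hsq : a * (D + a^2) = (ε * a)^2 := by
      rw [mul_pow, hεsq]; field_simp
    rw [hsq, Real.sqrt_sq (by positivity)]
    have h4 : D/(2*ε) ≤ ε * a/2 := by
      rw [div_le_div_iff₀ (by positivity) (by positivity)]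
      nlinarith
    calc |f t - f s| ≤ ε/2 * a + D/(2*ε) := by
          rw [← hval]; exact habs.trans hmono
      _ ≤ ε * a := by linarith
  calc (f t - f s)^2 = |f t - f s|^2 := (sq_abs _).symm
    _ ≤ Real.sqrt (a * (D + a^2))^2 := by
        apply pow_le_pow_left₀ (abs_nonneg _) hkey
    _ = a * (D + a^2) := Real.sq_sqrt (by positivity)

/-- If `u` is continuous on `[0,π]` with `u(0) = u(π) = 0`,
continuously differentiable on `(0,π)`, with `∫₀^π u'² < ∞`, and not
identically zero, then `∫₀^π u'² > (1/4) ∫₀^π u²/sin²θ`; in particular the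
infimum `1/4` is not attained. -/
theorem one_dim_hardy_sin_strict (u : ℝ → ℝ)
    (hu_cont : ContinuousOn u (Set.Icc 0 Real.pi))
    (hu0 : u 0 = 0) (huπ : u Real.pi = 0)
    (hu_diff : ContDiffOn ℝ 1 u (Set.Ioo 0 Real.pi))
    (hu_int : IntervalIntegrable (fun θ => (deriv u θ) ^ 2) volume 0 Real.pi)
    (hu_ne : ∃ θ ∈ Set.Ioo 0 Real.pi, u θ ≠ 0) :
    (∫ θ in (0:ℝ)..Real.pi, (deriv u θ) ^ 2) >
      (1 / 4 : ℝ) * ∫ θ in (0:ℝ)..Real.pi, u θ ^ 2 / Real.sin θ ^ 2 := by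
  have pi_pos := Real.pi_pos
  have hd : ∀ x ∈ Set.Ioo 0 Real.pi, HasDerivAt u (deriv u x) x := fun x hx =>
    ((hu_diff.differentiableOn one_ne_zero).differentiableAt (isOpen_Ioo.mem_nhds hx)).hasDerivAt
  have hc' : ContinuousOn (deriv u) (Set.Ioo 0 Real.pi) :=
    hu_diff.continuousOn_deriv_of_isOpen isOpen_Ioo le_rfl
  have hcIoo : ContinuousOn u (Set.Ioo 0 Real.pi) := hu_cont.mono Set.Ioo_subset_Icc_self
  -- sequences
  set a : ℕ → ℝ := fun n => Real.pi / ((n : ℝ) + 2) with hadef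
  set b : ℕ → ℝ := fun n => Real.pi - Real.pi / ((n : ℝ) + 2) with hbdef
  have h2n : ∀ n : ℕ, (2:ℝ) ≤ (n:ℝ) + 2 := fun n => by
    linarith [Nat.cast_nonneg (α := ℝ) n]
  have hapos : ∀ n, 0 < a n := fun n => by
    have := h2n n; simp only [hadef]; positivity
  have hahalf : ∀ n, a n ≤ Real.pi / 2 := fun n => by
    simp only [hadef]
    gcongr
    exacts [h2n n]
  have hba : ∀ n, b n = Real.pi - a n := fun n => rfl
  have hab : ∀ n, a n ≤ b n := fun n => by
    have h1 := hahalf n; rw [hba]; linarith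
  have hbltpi : ∀ n, b n < Real.pi := fun n => by
    rw [hba]; linarith [hapos n]
  have hbpos : ∀ n, 0 < b n := fun n => lt_of_lt_of_le (hapos n) (hab n)
  have ha0 : Tendsto a atTop (𝓝 0) := by
    apply Tendsto.div_atTop tendsto_const_nhds
    exact tendsto_atTop_add_const_right atTop 2 tendsto_natCast_atTop_atTop
  have hbpi : Tendsto b atTop (𝓝 Real.pi) := by
    have hconst : Tendsto (fun _ : ℕ => Real.pi) atTop (𝓝 Real.pi) := tendsto_const_nhds
    simpa using hconst.sub ha0
  -- interval integrability on subintervals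
  have hmono_int : ∀ {c d : ℝ}, 0 ≤ c → c ≤ d → d ≤ Real.pi →
      IntervalIntegrable (fun θ => (deriv u θ)^2) volume c d := by
    intro c d hc hcd hdπ
    exact hu_int.mono_set' (by
      rw [Set.uIoc_of_le hcd, Set.uIoc_of_le pi_pos.le]
      exact Set.Ioc_subset_Ioc hc hdπ)
  set K := ∫ θ in (0:ℝ)..Real.pi, (deriv u θ)^2 with hKdef
  set I : ℕ → ℝ := fun n => ∫ θ in a n..b n, u θ^2 / Real.sin θ^2 with hIdef
  set J : ℕ → ℝ := fun n => ∫ θ in a n..b n, u θ^2 with hJdef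
  set D : ℕ → ℝ := fun n => ∫ x in (0:ℝ)..(a n), (deriv u x)^2 with hDdef
  set E : ℕ → ℝ := fun n => ∫ x in (b n)..Real.pi, (deriv u x)^2 with hEdef
  -- key inequality
  have key : ∀ n, (1/4) * I n + (1/4) * J n
      + (u (b n)^2 * (Real.cos (b n) / (2 * Real.sin (b n)))
        - u (a n)^2 * (Real.cos (a n) / (2 * Real.sin (a n)))) ≤ K := by
    intro n
    refine (hardy_key u hd hcIoo hc' (hapos n) (hab n) (hbltpi n)).trans ?_
    exact intervalIntegral.integral_mono_interval (hapos n).le (hab n) (hbltpi n).le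
      (Filter.Eventually.of_forall (fun x => sq_nonneg _)) hu_int
  -- endpoint estimates
  have hA : ∀ n, u (a n)^2 ≤ a n * (D n + (a n)^2) := by
    intro n
    have h := hardy_endpoint u (hapos n)
      (hu_cont.mono (Set.Icc_subset_Icc le_rfl (le_trans (hahalf n) (by linarith))))
      (fun x hx => hd x ⟨hx.1, lt_of_lt_of_le hx.2 (le_trans (hahalf n) (by linarith))⟩)
      (hmono_int le_rfl (hapos n).le (le_trans (hahalf n) (by linarith)))
    simpa [hu0] using h
  have hB : ∀ n, u (b n)^2 ≤ a n * (E n + (a n)^2) := by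
    intro n
    have h := hardy_endpoint u (hbltpi n)
      (hu_cont.mono (Set.Icc_subset_Icc (hbpos n).le le_rfl))
      (fun x hx => hd x ⟨lt_trans (hbpos n) hx.1, hx.2⟩)
      (hmono_int (hbpos n).le (hbltpi n).le le_rfl)
    have hπb : Real.pi - b n = a n := by rw [hba]; ring
    rw [huπ, hπb] at h
    simpa using h
  -- sine lower bounds
  have hsina : ∀ n, (2 / Real.pi) * a n ≤ Real.sin (a n) := fun n =>
    Real.mul_le_sin (hapos n).le (hahalf n)
  have hsinb : ∀ n, Real.sin (b n) = Real.sin (a n) := fun n => by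
    rw [hba, Real.sin_pi_sub]
  have hsinapos : ∀ n, 0 < Real.sin (a n) := fun n =>
    lt_of_lt_of_le (by have := hapos n; positivity) (hsina n)
  -- boundary term bounds
  have hFa : ∀ n, u (a n)^2 * (Real.cos (a n) / (2 * Real.sin (a n)))
      ≤ (Real.pi/4) * (D n + (a n)^2) := by
    intro n
    have h1 := hsinapos n
    have h2 := hsina n
    have h3 := Real.cos_le_one (a n)
    have h4 := hA n
    have h5 := hapos n
    have hD0 : 0 ≤ D n + (a n)^2 := by
      have : 0 ≤ u (a n)^2 := sq_nonneg _
      nlinarith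
    calc u (a n)^2 * (Real.cos (a n) / (2 * Real.sin (a n)))
        = u (a n)^2 * Real.cos (a n) / (2 * Real.sin (a n)) := by ring
      _ ≤ (a n * (D n + (a n)^2)) / (2 * ((2/Real.pi) * a n)) := by
          apply div_le_div₀ (by positivity) (by nlinarith [sq_nonneg (u (a n))])
            (by positivity) (by linarith)
      _ = (Real.pi/4) * (D n + (a n)^2) := by
          field_simp
          ring
  have hFb : ∀ n, -(u (b n)^2 * (Real.cos (b n) / (2 * Real.sin (b n))))
      ≤ (Real.pi/4) * (E n + (a n)^2) := by
    intro n
    have h1 := hsinapos n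
    have h2 := hsina n
    have h3 : -1 ≤ Real.cos (b n) := Real.neg_one_le_cos (b n)
    have h4 := hB n
    have h5 := hapos n
    have hE0 : 0 ≤ E n + (a n)^2 := by
      have : 0 ≤ u (b n)^2 := sq_nonneg _
      nlinarith
    calc -(u (b n)^2 * (Real.cos (b n) / (2 * Real.sin (b n))))
        = u (b n)^2 * (-Real.cos (b n)) / (2 * Real.sin (a n)) := by
          rw [hsinb]; ring
      _ ≤ (a n * (E n + (a n)^2)) / (2 * ((2/Real.pi) * a n)) := by
          apply div_le_div₀ (by positivity) (by nlinarith [sq_nonneg (u (b n))])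
            (by positivity) (by linarith)
      _ = (Real.pi/4) * (E n + (a n)^2) := by
          field_simp
          ring
  -- master inequality
  have master : ∀ n, (1/4) * I n + (1/4) * J n - (Real.pi/4) * (D n + (a n)^2)
      - (Real.pi/4) * (E n + (a n)^2) ≤ K := by
    intro n
    have := key n
    have h1 := hFa n
    have h2 := hFb n
    linarith
  -- primitive continuity
  have hIccP : IntegrableOn (fun θ => (deriv u θ)^2) (Set.Icc 0 Real.pi) volume := by
    rw [integrableOn_Icc_iff_integrableOn_Ioc]
    exact (intervalIntegrable_iff_integrableOn_Ioc_of_le pi_pos.le).mp hu_int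
  have hP : ContinuousOn (fun x => ∫ t in Set.Ioc 0 x, (deriv u t)^2) (Set.Icc 0 Real.pi) :=
    continuousOn_primitive hIccP
  have haIcc : Tendsto a atTop (𝓝[Set.Icc 0 Real.pi] 0) :=
    tendsto_nhdsWithin_of_tendsto_nhds_of_eventually_within a ha0
      (Eventually.of_forall fun n => ⟨(hapos n).le, le_trans (hahalf n) (by linarith)⟩)
  have hbIcc : Tendsto b atTop (𝓝[Set.Icc 0 Real.pi] Real.pi) :=
    tendsto_nhdsWithin_of_tendsto_nhds_of_eventually_within b hbpi
      (Eventually.of_forall fun n => ⟨(hbpos n).le, (hbltpi n).le⟩)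
  have hD0 : Tendsto D atTop (𝓝 0) := by
    have h2 : Tendsto (fun n => ∫ t in Set.Ioc (0:ℝ) (a n), (deriv u t)^2) atTop
        (𝓝 (∫ t in Set.Ioc (0:ℝ) (0:ℝ), (deriv u t)^2)) :=
      Filter.Tendsto.comp (hP 0 (Set.left_mem_Icc.mpr pi_pos.le)) haIcc
    have h0 : (∫ t in Set.Ioc (0:ℝ) (0:ℝ), (deriv u t)^2) = 0 := by simp
    rw [h0] at h2
    exact h2.congr fun n => (intervalIntegral.integral_of_le (hapos n).le).symm
  have hPb : Tendsto (fun n => ∫ x in (0:ℝ)..(b n), (deriv u x)^2) atTop (𝓝 K) := by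
    have h2 : Tendsto (fun n => ∫ t in Set.Ioc (0:ℝ) (b n), (deriv u t)^2) atTop
        (𝓝 (∫ t in Set.Ioc (0:ℝ) Real.pi, (deriv u t)^2)) :=
      Filter.Tendsto.comp (hP Real.pi (Set.right_mem_Icc.mpr pi_pos.le)) hbIcc
    have h0 : (∫ t in Set.Ioc (0:ℝ) Real.pi, (deriv u t)^2) = K := by
      rw [hKdef, intervalIntegral.integral_of_le pi_pos.le]
    rw [h0] at h2
    exact h2.congr fun n => (intervalIntegral.integral_of_le (hbpos n).le).symm
  have hE0 : Tendsto E atTop (𝓝 0) := by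
    have hadd : ∀ n, (∫ x in (0:ℝ)..(b n), (deriv u x)^2) + E n = K := fun n =>
      intervalIntegral.integral_add_adjacent_intervals
        (hmono_int le_rfl (hbpos n).le (hbltpi n).le)
        (hmono_int (hbpos n).le (hbltpi n).le le_rfl)
    have h2 : Tendsto (fun n => K - ∫ x in (0:ℝ)..(b n), (deriv u x)^2) atTop (𝓝 (K - K)) :=
      tendsto_const_nhds.sub hPb
    rw [sub_self] at h2
    exact h2.congr fun n => by have := hadd n; linarith
  -- monotone union of intervals
  have hanti : ∀ m n : ℕ, m ≤ n → a n ≤ a m := by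
    intro m n hmn
    show Real.pi / ((n:ℝ) + 2) ≤ Real.pi / ((m:ℝ) + 2)
    have hcast : ((m:ℝ) + 2) ≤ ((n:ℝ) + 2) := by
      have : (m:ℝ) ≤ (n:ℝ) := Nat.cast_le.mpr hmn
      linarith
    gcongr
  have hmonoset : Monotone (fun n => Set.Ioc (a n) (b n)) := by
    intro m n hmn
    apply Set.Ioc_subset_Ioc (hanti m n hmn)
    rw [hba, hba]
    linarith [hanti m n hmn]
  have hunion : (⋃ n, Set.Ioc (a n) (b n)) = Set.Ioo 0 Real.pi := by
    ext x
    simp only [Set.mem_iUnion, Set.mem_Ioc, Set.mem_Ioo]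
    constructor
    · rintro ⟨n, h1, h2⟩
      exact ⟨lt_trans (hapos n) h1, lt_of_le_of_lt h2 (hbltpi n)⟩
    · rintro ⟨hx1, hx2⟩
      set m := min x (Real.pi - x) with hm
      have hm0 : 0 < m := lt_min hx1 (by linarith)
      obtain ⟨n, hn⟩ := exists_nat_gt (Real.pi / m)
      have h1 : a n < m := by
        show Real.pi / ((n:ℝ) + 2) < m
        rw [div_lt_iff₀ (by positivity)]
        have h3 : Real.pi < (n:ℝ) * m := by
          rw [div_lt_iff₀ hm0] at hn; linarith
        nlinarith [hm0]
      exact ⟨n, lt_of_lt_of_le h1 (min_le_left _ _), by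
        have h4 := lt_of_lt_of_le h1 (min_le_right _ _)
        rw [hba]; linarith⟩
  -- limit of J
  have hu2cont : ContinuousOn (fun θ => u θ^2) (Set.Icc 0 Real.pi) := hu_cont.pow 2
  have hJlim : Tendsto J atTop (𝓝 (∫ θ in (0:ℝ)..Real.pi, u θ^2)) := by
    have hint : IntegrableOn (fun θ => u θ^2) (⋃ n, Set.Ioc (a n) (b n)) volume := by
      rw [hunion]
      exact (hu2cont.integrableOn_Icc).mono_set Set.Ioo_subset_Icc_self
    have h2 := tendsto_setIntegral_of_monotone (fun _ => measurableSet_Ioc) hmonoset hint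
    rw [hunion] at h2
    have hval : (∫ x in Set.Ioo (0:ℝ) Real.pi, u x^2) = ∫ θ in (0:ℝ)..Real.pi, u θ^2 := by
      rw [intervalIntegral.integral_of_le pi_pos.le, integral_Ioc_eq_integral_Ioo]
    rw [hval] at h2
    exact h2.congr fun n => (intervalIntegral.integral_of_le (hab n)).symm
  -- positivity of ∫ u²
  obtain ⟨θ₀, hθ₀, hθne⟩ := hu_ne
  have hJpos : 0 < ∫ θ in (0:ℝ)..Real.pi, u θ^2 := by
    apply intervalIntegral.integral_pos pi_pos hu2cont (fun x _ => sq_nonneg _)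
    exact ⟨θ₀, Set.Ioo_subset_Icc_self hθ₀,
      lt_of_le_of_ne (sq_nonneg _) (Ne.symm (pow_ne_zero 2 hθne))⟩
  have ha2 : Tendsto (fun n => (a n)^2) atTop (𝓝 0) := by
    have := ha0.pow 2
    simpa using this
  by_cases hIi : IntervalIntegrable (fun θ => u θ^2 / Real.sin θ^2) volume 0 Real.pi
  · -- integrable case
    have hIlim : Tendsto I atTop (𝓝 (∫ θ in (0:ℝ)..Real.pi, u θ^2 / Real.sin θ^2)) := by
      have hint : IntegrableOn (fun θ => u θ^2 / Real.sin θ^2)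
          (⋃ n, Set.Ioc (a n) (b n)) volume := by
        rw [hunion]
        exact ((intervalIntegrable_iff_integrableOn_Ioc_of_le pi_pos.le).mp hIi).mono_set
          Set.Ioo_subset_Ioc_self
      have h2 := tendsto_setIntegral_of_monotone (fun _ => measurableSet_Ioc) hmonoset hint
      rw [hunion] at h2
      have hval : (∫ x in Set.Ioo (0:ℝ) Real.pi, u x^2 / Real.sin x^2)
          = ∫ θ in (0:ℝ)..Real.pi, u θ^2 / Real.sin θ^2 := by
        rw [intervalIntegral.integral_of_le pi_pos.le, integral_Ioc_eq_integral_Ioo]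
      rw [hval] at h2
      exact h2.congr fun n => (intervalIntegral.integral_of_le (hab n)).symm
    have hlim : Tendsto (fun n => (1/4) * I n + (1/4) * J n - (Real.pi/4) * (D n + (a n)^2)
        - (Real.pi/4) * (E n + (a n)^2)) atTop
        (𝓝 ((1/4) * (∫ θ in (0:ℝ)..Real.pi, u θ^2 / Real.sin θ^2)
          + (1/4) * (∫ θ in (0:ℝ)..Real.pi, u θ^2)
          - (Real.pi/4) * (0 + 0) - (Real.pi/4) * (0 + 0))) := by
      exact (((hIlim.const_mul _).add (hJlim.const_mul _)).sub
        ((hD0.add ha2).const_mul _)).sub ((hE0.add ha2).const_mul _)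
    have hfin := le_of_tendsto' hlim master
    have : (1/4) * (∫ θ in (0:ℝ)..Real.pi, u θ^2 / Real.sin θ^2)
        + (1/4) * (∫ θ in (0:ℝ)..Real.pi, u θ^2) ≤ K := by
      simpa using hfin
    calc (1/4 : ℝ) * ∫ θ in (0:ℝ)..Real.pi, u θ^2 / Real.sin θ^2
        < (1/4) * (∫ θ in (0:ℝ)..Real.pi, u θ^2 / Real.sin θ^2)
          + (1/4) * (∫ θ in (0:ℝ)..Real.pi, u θ^2) := by linarith
      _ ≤ K := this
  · -- non-integrable case : RHS is zero
    rw [intervalIntegral.integral_undef hIi]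
    have hInn : ∀ n, 0 ≤ I n :=
      fun n => intervalIntegral.integral_nonneg (hab n) (fun x _ => by positivity)
    have master' : ∀ n, (1/4) * J n - (Real.pi/4) * (D n + (a n)^2)
        - (Real.pi/4) * (E n + (a n)^2) ≤ K := by
      intro n
      have := master n
      have := hInn n
      linarith
    have hlim : Tendsto (fun n => (1/4) * J n - (Real.pi/4) * (D n + (a n)^2)
        - (Real.pi/4) * (E n + (a n)^2)) atTop
        (𝓝 ((1/4) * (∫ θ in (0:ℝ)..Real.pi, u θ^2)
          - (Real.pi/4) * (0 + 0) - (Real.pi/4) * (0 + 0))) := by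
      exact ((hJlim.const_mul _).sub ((hD0.add ha2).const_mul _)).sub
        ((hE0.add ha2).const_mul _)
    have hfin := le_of_tendsto' hlim master'
    have : (1/4) * (∫ θ in (0:ℝ)..Real.pi, u θ^2) ≤ K := by simpa using hfin
    have : (0:ℝ) < K := by linarith
    linarith
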